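/- In the defocusing case ($\mu>\pi^2$, equation $\phi''-\phi^3=-\mu\phi$), the operator $L_\mu^+ = -\frac{d^2}{dx^2} - \mu + 3\phi_\mu^2$ on $H^2\cap H^1_0(0,1)$ is positive definite: its smallest eigenvalue is strictly positive. -/

import Mathlib

open Set

/-- The defocusing ground state predicate: positive solution of `φ'' - φ³ = -μ φ` on
`(0,1)` with Dirichlet boundary conditions. -/
def IsGroundStateD (μ : ℝ) (φ : ℝ → ℝ) : Prop :=
  ∃ φ' φ'' φ''' : ℝ → ℝ,
    (∀ x ∈ Set.Icc (0:ℝ) 1, HasDerivAt φ (φ' x) x ∧ HasDerivAt φ' (φ'' x) x ∧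
      HasDerivAt φ'' (φ''' x) x) ∧
    ContinuousOn φ''' (Set.Icc 0 1) ∧
    φ 0 = 0 ∧ φ 1 = 0 ∧
    (∀ x ∈ Set.Ioo (0:ℝ) 1, 0 < φ x) ∧
    (∀ x ∈ Set.Icc (0:ℝ) 1, φ'' x - φ x ^ 3 = -μ * φ x)

lemma slope_nonneg_right {u : ℝ → ℝ} {d a b : ℝ} (hab : a < b)
    (h : HasDerivAt u d a) (h0 : u a = 0) (hnn : ∀ x ∈ Set.Ioo a b, 0 ≤ u x) : 0 ≤ d := by
  rw [hasDerivAt_iff_tendsto_slope] at h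
  have h' : Filter.Tendsto (slope u a) (nhdsWithin a (Set.Ioi a)) (nhds d) :=
    h.mono_left (nhdsWithin_mono a (fun x hx => ne_of_gt hx))
  refine ge_of_tendsto h' ?_
  filter_upwards [Ioo_mem_nhdsGT_of_mem ⟨le_refl a, hab⟩] with x hx
  have hnx := hnn x hx
  rw [slope_def_field, h0, sub_zero]
  exact div_nonneg hnx (by linarith [hx.1])

lemma slope_nonpos_left {u : ℝ → ℝ} {d a b : ℝ} (hab : a < b)
    (h : HasDerivAt u d b) (h0 : u b = 0) (hnn : ∀ x ∈ Set.Ioo a b, 0 ≤ u x) : d ≤ 0 := by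
  rw [hasDerivAt_iff_tendsto_slope] at h
  have h' : Filter.Tendsto (slope u b) (nhdsWithin b (Set.Iio b)) (nhds d) :=
    h.mono_left (nhdsWithin_mono b (fun x hx => ne_of_lt hx))
  refine le_of_tendsto h' ?_
  filter_upwards [Ioo_mem_nhdsLT_of_mem ⟨hab, le_refl b⟩] with x hx
  have hnx := hnn x hx
  rw [slope_def_field, h0, sub_zero]
  exact div_nonpos_of_nonneg_of_nonpos hnx (by linarith [hx.2])

lemma key_pos (μ : ℝ) (φ : ℝ → ℝ) (hφ : IsGroundStateD μ φ) (E : ℝ) (u u' u'' : ℝ → ℝ)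
    (hu : ∀ x ∈ Set.Icc (0:ℝ) 1, HasDerivAt u (u' x) x ∧ HasDerivAt u' (u'' x) x)
    (hb0 : u 0 = 0) (hb1 : u 1 = 0)
    (x₀ : ℝ) (hx₀ : x₀ ∈ Set.Ioo (0:ℝ) 1) (hux₀ : 0 < u x₀)
    (heq : ∀ x ∈ Set.Icc (0:ℝ) 1, -u'' x - μ * u x + 3 * φ x ^ 2 * u x = E * u x) :
    0 < E := by
  obtain ⟨φ', φ'', φ''', hφd, -, hφ0, hφ1, hφpos, hode⟩ := hφ
  by_contra hE
  push_neg at hE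
  have hucont : ContinuousOn u (Icc 0 1) := fun x hx =>
    ((hu x hx).1.continuousAt).continuousWithinAt
  have hx₀I : x₀ ∈ Icc (0:ℝ) 1 := Ioo_subset_Icc_self hx₀
  -- left zero
  set Sa : Set ℝ := Icc 0 x₀ ∩ u ⁻¹' {0} with hSa
  have h0Sa : (0:ℝ) ∈ Sa := ⟨⟨le_refl 0, hx₀.1.le⟩, by simp [hb0]⟩
  have hSabdd : BddAbove Sa := ⟨x₀, fun x hx => hx.1.2⟩
  set a := sSup Sa with ha
  have haL : IsLUB Sa a := isLUB_csSup ⟨0, h0Sa⟩ hSabdd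
  have ha0 : 0 ≤ a := haL.1 h0Sa
  have hax₀ : a ≤ x₀ := haL.2 (fun x hx => hx.1.2)
  have haI : a ∈ Icc (0:ℝ) 1 := ⟨ha0, hax₀.trans hx₀.2.le⟩
  have hua : u a = 0 := by
    have hc : ContinuousWithinAt u Sa a := ((hu a haI).1.continuousAt).continuousWithinAt
    have hmem : u a ∈ closure (u '' Sa) := hc.mem_closure_image (haL.mem_closure ⟨0, h0Sa⟩)
    have hsub : u '' Sa ⊆ {0} := by rintro y ⟨x, hx, rfl⟩; exact hx.2
    have := closure_mono hsub hmem
    simpa using this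
  have halt : a < x₀ :=
    lt_of_le_of_ne hax₀ (fun h => absurd hua (by rw [h]; exact ne_of_gt hux₀))
  have hposA : ∀ x, a < x → x ≤ x₀ → 0 < u x := by
    intro x hax hxx₀
    by_contra hle
    push_neg at hle
    have hxI : Icc x x₀ ⊆ Icc (0:ℝ) 1 := Icc_subset_Icc (ha0.trans hax.le) hx₀.2.le
    obtain ⟨c, hc, hc0⟩ := intermediate_value_Icc hxx₀ (hucont.mono hxI) ⟨hle, hux₀.le⟩
    have hcSa : c ∈ Sa := ⟨⟨(ha0.trans hax.le).trans hc.1, hc.2⟩, by simp [hc0]⟩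
    have := haL.1 hcSa
    linarith [hc.1]
  -- right zero
  set Sb : Set ℝ := Icc x₀ 1 ∩ u ⁻¹' {0} with hSb
  have h1Sb : (1:ℝ) ∈ Sb := ⟨⟨hx₀.2.le, le_refl 1⟩, by simp [hb1]⟩
  have hSbbdd : BddBelow Sb := ⟨x₀, fun x hx => hx.1.1⟩
  set b := sInf Sb with hb
  have hbG : IsGLB Sb b := isGLB_csInf ⟨1, h1Sb⟩ hSbbdd
  have hb1' : b ≤ 1 := hbG.1 h1Sb
  have hx₀b : x₀ ≤ b := hbG.2 (fun x hx => hx.1.1)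
  have hbI : b ∈ Icc (0:ℝ) 1 := ⟨hx₀.1.le.trans hx₀b, hb1'⟩
  have hub : u b = 0 := by
    have hc : ContinuousWithinAt u Sb b := ((hu b hbI).1.continuousAt).continuousWithinAt
    have hmem : u b ∈ closure (u '' Sb) := hc.mem_closure_image (hbG.mem_closure ⟨1, h1Sb⟩)
    have hsub : u '' Sb ⊆ {0} := by rintro y ⟨x, hx, rfl⟩; exact hx.2
    have := closure_mono hsub hmem
    simpa using this
  have hbgt : x₀ < b :=
    lt_of_le_of_ne hx₀b (fun h => absurd hub (by rw [← h]; exact ne_of_gt hux₀))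
  have hposB : ∀ x, x₀ ≤ x → x < b → 0 < u x := by
    intro x hx₀x hxb
    by_contra hle
    push_neg at hle
    have hxI : Icc x₀ x ⊆ Icc (0:ℝ) 1 := Icc_subset_Icc hx₀.1.le (hxb.le.trans hb1')
    obtain ⟨c, hc, hc0⟩ := intermediate_value_Icc' hx₀x (hucont.mono hxI) ⟨hle, hux₀.le⟩
    have hcSb : c ∈ Sb := ⟨⟨hc.1, (hc.2.trans hxb.le).trans hb1'⟩, by simp [hc0]⟩
    have := hbG.1 hcSb
    linarith [hc.2]
  have hab : a < b := halt.trans hbgt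
  have hupos : ∀ x ∈ Ioo a b, 0 < u x := by
    intro x hx
    rcases le_or_gt x x₀ with h | h
    · exact hposA x hx.1 h
    · exact hposB x h.le hx.2
  -- Wronskian and integral identity
  set W : ℝ → ℝ := fun x => u' x * φ x - u x * φ' x with hWdef
  set g : ℝ → ℝ := fun x => u x * φ x * (2 * φ x ^ 2 - E) with hgdef
  have hsubI : Icc a b ⊆ Icc (0:ℝ) 1 := Icc_subset_Icc ha0 hb1'
  have hWd : ∀ x ∈ Icc a b, HasDerivAt W (g x) x := by
    intro x hx
    have hxI := hsubI hx
    have h3 := ((hu x hxI).2.mul (hφd x hxI).1).sub ((hu x hxI).1.mul (hφd x hxI).2.1)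
    refine h3.congr_deriv (Eq.symm ?_)
    have e1 := heq x hxI
    have e2 := hode x hxI
    simp only [hgdef]
    linear_combination (φ x) * e1 + u x * e2
  have hφcont : ContinuousOn φ (Icc 0 1) := fun x hx =>
    ((hφd x hx).1.continuousAt).continuousWithinAt
  have hgcont : ContinuousOn g (uIcc a b) := by
    rw [uIcc_of_le hab.le]
    exact ((hucont.mono hsubI).mul (hφcont.mono hsubI)).mul
      ((continuousOn_const.mul ((hφcont.mono hsubI).pow 2)).sub continuousOn_const)
  have hgint : IntervalIntegrable g MeasureTheory.volume a b := hgcont.intervalIntegrable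
  have hint : ∫ x in a..b, g x = W b - W a := by
    apply intervalIntegral.integral_eq_sub_of_hasDerivAt
    · intro x hx
      exact hWd x (by rwa [uIcc_of_le hab.le] at hx)
    · exact hgint
  have hIpos : 0 < ∫ x in a..b, g x := by
    apply intervalIntegral.intervalIntegral_pos_of_pos_on hgint ?_ hab
    intro x hx
    have hux := hupos x hx
    have hφx : 0 < φ x := hφpos x ⟨lt_of_le_of_lt ha0 hx.1, lt_of_lt_of_le hx.2 hb1'⟩
    have h2 : 0 < 2 * φ x ^ 2 - E := by nlinarith
    exact mul_pos (mul_pos hux hφx) h2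
  -- boundary signs
  have hφa : 0 ≤ φ a := by
    rcases eq_or_lt_of_le ha0 with h | h
    · simp [← h, hφ0]
    · exact (hφpos a ⟨h, halt.trans hx₀.2⟩).le
  have hφb : 0 ≤ φ b := by
    rcases eq_or_lt_of_le hb1' with h | h
    · simp [h, hφ1]
    · exact (hφpos b ⟨hx₀.1.trans hbgt, h⟩).le
  have hu'a : 0 ≤ u' a := slope_nonneg_right hab (hu a haI).1 hua (fun x hx => (hupos x hx).le)
  have hu'b : u' b ≤ 0 := slope_nonpos_left hab (hu b hbI).1 hub (fun x hx => (hupos x hx).le)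
  have hWb : W b ≤ 0 := by
    simp only [hWdef, hub, zero_mul, sub_zero]
    nlinarith [mul_nonneg (neg_nonneg.mpr hu'b) hφb]
  have hWa : 0 ≤ W a := by
    simp only [hWdef, hua, zero_mul, sub_zero]
    exact mul_nonneg hu'a hφa
  rw [hint] at hIpos
  linarith

/-- in the defocusing case (`μ > π²`), the operator
`L_μ⁺ = -d²/dx² - μ + 3φ_μ²` with Dirichlet conditions is positive definite: every
eigenvalue is strictly positive. -/
theorem stmt_8 (μ : ℝ) (hμ : Real.pi ^ 2 < μ) (φ : ℝ → ℝ)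
    (hφ : IsGroundStateD μ φ)
    (E : ℝ) (u u' u'' : ℝ → ℝ)
    (hu : ∀ x ∈ Set.Icc (0:ℝ) 1, HasDerivAt u (u' x) x ∧ HasDerivAt u' (u'' x) x)
    (hb0 : u 0 = 0) (hb1 : u 1 = 0)
    (hne : ∃ x ∈ Set.Ioo (0:ℝ) 1, u x ≠ 0)
    (heq : ∀ x ∈ Set.Icc (0:ℝ) 1,
      -u'' x - μ * u x + 3 * φ x ^ 2 * u x = E * u x) :
    0 < E := by
  obtain ⟨x₀, hx₀, hux₀⟩ := hne
  rcases hux₀.lt_or_gt with hneg | hpos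
  · refine key_pos μ φ hφ E (fun x => -u x) (fun x => -u' x) (fun x => -u'' x)
      (fun x hx => ⟨(hu x hx).1.neg, (hu x hx).2.neg⟩) (by simp [hb0]) (by simp [hb1])
      x₀ hx₀ (by simpa using hneg) ?_
    intro x hx
    have := heq x hx
    ring_nf
    linarith [this]
  · exact key_pos μ φ hφ E u u' u'' hu hb0 hb1 x₀ hx₀ hpos heq
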